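/- Let G = (V,E) be a finite simple graph with positive edge weights (θ_e)_{e∈E}. Then the weighted Bethe entropy S^B_G is a concave function on the convex set FM(G). Moreover, if θ_e = 1 for all e ∈ E, then S^B_G(x) ≥ 0 for every x ∈ FM(G). -/

import Mathlib

open Finset
open scoped BigOperators Classical

noncomputable section

/-- The finite set of edges of a graph on a finite vertex type. -/
def edgeFS {V : Type*} [Fintype V] (G : SimpleGraph V) : Finset (Sym2 V) :=
  (Set.toFinite G.edgeSet).toFinset

/-- The finite set of neighbours of a vertex. -/
def nbrFS {V : Type*} [Fintype V] (G : SimpleGraph V) (u : V) : Finset V :=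
  (Set.toFinite (G.neighborSet u)).toFinset

/-- `M` is (the edge set of) a matching of `G`: a set of pairwise disjoint edges. -/
def IsMatchingF {V : Type*} (G : SimpleGraph V) (M : Finset (Sym2 V)) : Prop :=
  (↑M ⊆ G.edgeSet) ∧ ∀ e ∈ M, ∀ f ∈ M, e ≠ f → ∀ v : V, v ∈ e → v ∉ f

/-- The weighted matching count `w_k(G) = ∑_{M matching, |M| = k} ∏_{e ∈ M} θ_e`. -/
def wCount {V : Type*} [Fintype V] (G : SimpleGraph V) (θ : Sym2 V → ℝ) (k : ℕ) : ℝ :=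
  ∑ M ∈ Finset.univ.filter
      (fun M : Finset (Sym2 V) => IsMatchingF G M ∧ M.card = k),
    ∏ e ∈ M, θ e

/-- The matching number `ν(G) = max {k | w_k(G) > 0}`. -/
def nuW {V : Type*} [Fintype V] (G : SimpleGraph V) (θ : Sym2 V → ℝ) : ℕ :=
  sSup {k : ℕ | 0 < wCount G θ k}

/-- The weighted matching generating function `P_G(z) = ∑_{k=0}^{ν(G)} w_k(G) z^k`. -/
def PW {V : Type*} [Fintype V] (G : SimpleGraph V) (θ : Sym2 V → ℝ) (z : ℝ) : ℝ :=
  ∑ k ∈ Finset.range (nuW G θ + 1), wCount G θ k * z ^ k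

/-- `incSum G x v = ∑_{e ∋ v} x_e`. -/
def incSum {V : Type*} [Fintype V] (G : SimpleGraph V) (x : Sym2 V → ℝ) (v : V) : ℝ :=
  ∑ e ∈ (edgeFS G).filter (fun e => v ∈ e), x e

/-- Membership in the fractional matching polytope `FM(G)`. -/
def memFM {V : Type*} [Fintype V] (G : SimpleGraph V) (x : Sym2 V → ℝ) : Prop :=
  (∀ e ∈ edgeFS G, 0 ≤ x e) ∧ ∀ v : V, incSum G x v ≤ 1

/-- The fractional matching number `ν*(G) = max_{x ∈ FM(G)} ∑_e x_e`. -/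
def nuStar {V : Type*} [Fintype V] (G : SimpleGraph V) : ℝ :=
  sSup {r : ℝ | ∃ x : Sym2 V → ℝ, memFM G x ∧ r = ∑ e ∈ edgeFS G, x e}

/-- The weighted Bethe entropy `S^B_G(x)` (with the convention `0 · ln 0 = 0`, which holds
since `Real.log 0 = 0`). -/
def SBW {V : Type*} [Fintype V] (G : SimpleGraph V) (θ x : Sym2 V → ℝ) : ℝ :=
  (∑ e ∈ edgeFS G, (x e * Real.log (θ e / x e) + (1 - x e) * Real.log (1 - x e)))
  - ∑ v : V, (1 - incSum G x v) * Real.log (1 - incSum G x v)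

/-- `y : V × V → ℝ` is a (positive) solution on directed edges of the message recursion
`y_{u→v} = z / (1 + ∑_{w ∈ ∂u∖{v}} θ_{wu} y_{w→u})`. -/
def MsgFP {V : Type*} [Fintype V] (G : SimpleGraph V) (θ : Sym2 V → ℝ) (z : ℝ)
    (y : V × V → ℝ) : Prop :=
  ∀ u v : V, G.Adj u v →
    0 < y (u, v) ∧
    y (u, v) = z / (1 + ∑ w ∈ (nbrFS G u).erase v, θ s(w, u) * y (w, u))

lemma fW_super {a b : ℝ} (ha : 0 ≤ a) (hb : 0 ≤ b) (hab : a + b < 1/2) :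
    a*(1-a)/(1-2*a) + b*(1-b)/(1-2*b) ≤ (a+b)*(1-(a+b))/(1-2*(a+b)) := by
  have da : (0:ℝ) < 1 - 2*a := by linarith
  have db : (0:ℝ) < 1 - 2*b := by linarith
  have dab : (0:ℝ) < 1 - 2*(a+b) := by linarith
  rw [div_add_div _ _ da.ne' db.ne', div_le_div_iff₀ (mul_pos da db) dab]
  nlinarith [mul_nonneg (mul_nonneg ha hb) (show (0:ℝ) ≤ 1 - a - b by linarith)]

lemma fW_sum {ι : Type*} (s : Finset ι) (t : ι → ℝ) (h0 : ∀ i ∈ s, 0 ≤ t i)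
    (hs : ∑ i ∈ s, t i < 1/2) :
    ∑ i ∈ s, t i*(1-t i)/(1-2*t i)
      ≤ (∑ i ∈ s, t i)*(1-(∑ i ∈ s, t i))/(1-2*(∑ i ∈ s, t i)) := by
  induction s using Finset.cons_induction with
  | empty => simp
  | cons a s' ha IH =>
    rw [Finset.sum_cons] at hs ⊢
    rw [Finset.sum_cons]
    have h0' : ∀ i ∈ s', 0 ≤ t i := fun i hi => h0 i (Finset.mem_cons.2 (Or.inr hi))
    have hta : 0 ≤ t a := h0 a (Finset.mem_cons_self a s')
    have hs'0 : 0 ≤ ∑ i ∈ s', t i := Finset.sum_nonneg h0'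
    have hs' : ∑ i ∈ s', t i < 1/2 := by linarith
    have := IH h0' hs'
    have h2 := fW_super hta hs'0 hs
    linarith

lemma sq_div_add (x y p q : ℝ) (hp : 0 < p) (hq : 0 < q) :
    (x+y)^2/(p+q) ≤ x^2/p + y^2/q := by
  rw [div_add_div _ _ hp.ne' hq.ne', div_le_div_iff₀ (by linarith) (mul_pos hp hq)]
  nlinarith [sq_nonneg (x*q - y*p)]

lemma starIneq {ι : Type*} (s : Finset ι) (u h : ι → ℝ) (hu : ∀ i ∈ s, 0 < u i)
    (hS : ∑ i ∈ s, u i < 1) :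
    ∑ i ∈ s, (h i)^2/(1 - u i)
      ≤ ∑ i ∈ s, (h i)^2/(u i) + 2*(∑ i ∈ s, h i)^2/(1 - ∑ i ∈ s, u i) := by
  classical
  have hq : 0 < 1 - ∑ i ∈ s, u i := by linarith
  by_cases hbig : ∃ i ∈ s, 1/2 < u i
  · obtain ⟨i₀, hi₀, hbig⟩ := hbig
    set s' := s.erase i₀ with hs'def
    have hsum_u : u i₀ + ∑ j ∈ s', u j = ∑ i ∈ s, u i := Finset.add_sum_erase s u hi₀
    have hsum_h : h i₀ + ∑ j ∈ s', h j = ∑ i ∈ s, h i := Finset.add_sum_erase s h hi₀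
    set σ := ∑ j ∈ s', u j with hσdef
    set Y := ∑ j ∈ s', h j with hYdef
    set T := ∑ i ∈ s, h i with hTdef
    have hmem : ∀ j ∈ s', j ∈ s := fun j hj => Finset.mem_of_mem_erase hj
    have hu' : ∀ j ∈ s', 0 < u j := fun j hj => hu j (hmem j hj)
    have hσ0 : 0 ≤ σ := Finset.sum_nonneg (fun j hj => (hu' j hj).le)
    have hσhalf : σ < 1/2 := by linarith
    have hujσ : ∀ j ∈ s', u j ≤ σ :=
      fun j hj => Finset.single_le_sum (fun i hi => (hu' i hi).le) hj
    have hu0 : 0 < u i₀ := hu i₀ hi₀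
    have hu01 : u i₀ < 1 := by linarith
    have hr : (0:ℝ) < 1 - u i₀ := by linarith
    -- expand sums over s as i₀ term plus s'
    rw [← Finset.add_sum_erase s (fun i => (h i)^2/(1 - u i)) hi₀,
        ← Finset.add_sum_erase s (fun i => (h i)^2/(u i)) hi₀]
    -- rewrite the s' parts
    have expand : ∑ j ∈ s', (h j)^2/(1 - u j)
        = ∑ j ∈ s', (h j)^2/(u j) - ∑ j ∈ s', (h j)^2 * ((1-2*u j)/(u j*(1-u j))) := by
      rw [← Finset.sum_sub_distrib]
      refine Finset.sum_congr rfl (fun j hj => ?_)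
      have h1 : 0 < u j := hu' j hj
      have h2 : u j < 1/2 := lt_of_le_of_lt (hujσ j hj) hσhalf
      have h3 : (0:ℝ) < 1 - u j := by linarith
      field_simp
      ring
    rw [expand]
    set Q := ∑ j ∈ s', (h j)^2 * ((1-2*u j)/(u j*(1-u j))) with hQdef
    have key : (h i₀)^2/(1 - u i₀) - (h i₀)^2/(u i₀) ≤ Q + 2*T^2/(1 - ∑ i ∈ s, u i) := by
      set q := 1 - ∑ i ∈ s, u i with hqdef
      set w₀ := q/2 with hw₀def
      have hw₀ : 0 < w₀ := by positivity
      set W := ∑ j ∈ s', u j*(1-u j)/(1-2*u j) with hWdef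
      have hwj : ∀ j ∈ s', 0 < u j*(1-u j)/(1-2*u j) := by
        intro j hj
        have h1 : 0 < u j := hu' j hj
        have h2 : u j < 1/2 := lt_of_le_of_lt (hujσ j hj) hσhalf
        have h3 : (0:ℝ) < 1 - u j := by linarith
        have h4 : (0:ℝ) < 1 - 2*u j := by linarith
        positivity
      have hW0 : 0 ≤ W := Finset.sum_nonneg (fun j hj => (hwj j hj).le)
      -- Claim1 : Y^2 / W ≤ Q
      have hQW : Y^2 / W ≤ Q := by
        have := Finset.sq_sum_div_le_sum_sq_div s' h hwj
        refine this.trans (le_of_eq (Finset.sum_congr rfl (fun j hj => ?_)))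
        have h1 : 0 < u j := hu' j hj
        have h2 : u j < 1/2 := lt_of_le_of_lt (hujσ j hj) hσhalf
        have h3 : (0:ℝ) < 1 - u j := by linarith
        have h4 : (0:ℝ) < 1 - 2*u j := by linarith
        field_simp
      have hQ0 : 0 ≤ Q := by
        refine Finset.sum_nonneg (fun j hj => ?_)
        have h1 : 0 < u j := hu' j hj
        have h2 : u j < 1/2 := lt_of_le_of_lt (hujσ j hj) hσhalf
        have h3 : (0:ℝ) < 1 - u j := by linarith
        have h4 : (0:ℝ) < 1 - 2*u j := by linarith
        positivity
      -- Claim2+3 : w₀ + W ≤ fW r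
      have hWfσ : W ≤ σ*(1-σ)/(1-2*σ) := fW_sum s' u (fun j hj => (hu' j hj).le) hσhalf
      have hσr : σ < 1 - u i₀ := by linarith
      have hfσr : q/2 + σ*(1-σ)/(1-2*σ) ≤ (1-u i₀)*(1-(1-u i₀))/(1-2*(1-u i₀)) := by
        have d1 : (0:ℝ) < 1 - 2*σ := by linarith
        have d2 : (0:ℝ) < 1 - 2*(1-u i₀) := by linarith
        have hqv : q = (1 - u i₀) - σ := by rw [hqdef, ← hsum_u]; ring
        rw [div_add_div _ _ (two_ne_zero) d1.ne', div_le_div_iff₀ (by positivity) d2, hqv]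
        nlinarith [hσr, hσ0]
      have hfr : (1-u i₀)*(1-(1-u i₀))/(1-2*(1-u i₀)) = u i₀*(1-u i₀)/(2*u i₀-1) := by
        ring_nf
      have hwW : 0 < w₀ + W := by linarith
      have hfrpos : (0:ℝ) < u i₀*(1-u i₀)/(2*u i₀-1) := by
        have : (0:ℝ) < 2*u i₀ - 1 := by linarith
        positivity
      have hle : w₀ + W ≤ u i₀*(1-u i₀)/(2*u i₀-1) := by
        calc w₀ + W ≤ q/2 + σ*(1-σ)/(1-2*σ) := by rw [hw₀def]; linarith
        _ ≤ _ := by rw [← hfr]; exact hfσr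
      -- Claim4
      have heq0 : (h i₀)^2/(1 - u i₀) - (h i₀)^2/(u i₀)
          = (h i₀)^2 * ((2*u i₀-1)/(u i₀*(1-u i₀))) := by
        field_simp
        ring
      have hc₀ : (2*u i₀-1)/(u i₀*(1-u i₀)) ≤ 1/(w₀+W) := by
        rw [div_le_div_iff₀ (by positivity) hwW]
        have h21 : (0:ℝ) < 2*u i₀ - 1 := by linarith
        calc (2*u i₀-1) * (w₀+W) ≤ (2*u i₀-1) * (u i₀*(1-u i₀)/(2*u i₀-1)) := by
              exact mul_le_mul_of_nonneg_left hle h21.le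
        _ = u i₀*(1-u i₀) := by field_simp
        _ = 1 * (u i₀*(1-u i₀)) := by ring
      have step1 : (h i₀)^2/(1 - u i₀) - (h i₀)^2/(u i₀) ≤ (h i₀)^2/(w₀+W) := by
        rw [heq0, div_eq_mul_inv ((h i₀)^2), ← one_div]
        exact mul_le_mul_of_nonneg_left hc₀ (sq_nonneg _)
      -- Claim5
      have step2 : (h i₀)^2/(w₀+W) ≤ T^2/w₀ + Q := by
        rcases Finset.eq_empty_or_nonempty s' with hs'e | hs'n
        · have hY : Y = 0 := by rw [hYdef, hs'e]; simp
          have hWe : W = 0 := by rw [hWdef, hs'e]; simp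
          have hQe : Q = 0 := by rw [hQdef, hs'e]; simp
          have hh : h i₀ = T := by rw [← hsum_h, hYdef, hs'e]; simp
          rw [hWe, hQe, hh, add_zero, add_zero]
        · have hW : 0 < W := Finset.sum_pos hwj hs'n
          have hh : h i₀ = T - Y := by linarith [hsum_h]
          have heq2 : (h i₀)^2/(w₀+W) = (T + (-Y))^2/(w₀+W) := by rw [hh]; ring_nf
          rw [heq2]
          calc (T + (-Y))^2/(w₀+W) ≤ T^2/w₀ + (-Y)^2/W := sq_div_add T (-Y) w₀ W hw₀ hW
          _ = T^2/w₀ + Y^2/W := by ring_nf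
          _ ≤ T^2/w₀ + Q := by linarith
      have hTw : T^2/w₀ = 2*T^2/q := by
        rw [hw₀def, div_div_eq_mul_div]
        ring
      calc (h i₀)^2/(1 - u i₀) - (h i₀)^2/(u i₀) ≤ (h i₀)^2/(w₀+W) := step1
      _ ≤ T^2/w₀ + Q := step2
      _ = Q + 2*T^2/q := by rw [hTw]; ring
    linarith
  · push_neg at hbig
    have hterm : ∀ i ∈ s, (h i)^2/(1 - u i) ≤ (h i)^2/(u i) := by
      intro i hi
      have h1 : 0 < u i := hu i hi
      have h2 : u i ≤ 1 - u i := by have := hbig i hi; linarith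
      exact div_le_div_of_nonneg_left (sq_nonneg _) h1 h2
    have h3 : (0:ℝ) ≤ 2*(∑ i ∈ s, h i)^2/(1 - ∑ i ∈ s, u i) := by positivity
    have := Finset.sum_le_sum hterm
    linarith


/-- auxiliary: edge entropy term -/
noncomputable def bEnt (t : ℝ) : ℝ := -(t * Real.log t) + (1-t) * Real.log (1-t)

lemma bEnt_zero : bEnt 0 = 0 := by simp [bEnt]

lemma plog_ge (p q : ℝ) (hp : 0 < p) (hq : 0 < q) : p - p^2/q ≤ p * Real.log (q/p) := by
  have h1 : Real.log (p/q) ≤ p/q - 1 := Real.log_le_sub_one_of_pos (by positivity)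
  have h2 : Real.log (q/p) = - Real.log (p/q) := by
    rw [← Real.log_inv]
    congr 1
    field_simp
  have h3 : 1 - p/q ≤ Real.log (q/p) := by rw [h2]; linarith
  calc p - p^2/q = p * (1 - p/q) := by field_simp
  _ ≤ p * Real.log (q/p) := mul_le_mul_of_nonneg_left h3 hp.le

lemma bEnt_superadd {x y : ℝ} (hx : 0 ≤ x) (hy : 0 ≤ y) (hxy : x + y ≤ 1) :
    bEnt (x+y) ≤ bEnt x + bEnt y := by
  rcases eq_or_lt_of_le hx with hx0 | hx0
  · rw [← hx0]; simp [bEnt_zero]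
  rcases eq_or_lt_of_le hy with hy0 | hy0
  · rw [← hy0]; simp [bEnt_zero]
  have hx1 : x < 1 := by linarith
  have hy1 : y < 1 := by linarith
  rcases eq_or_lt_of_le hxy with hs1 | hs1
  · -- x + y = 1 : equality, both sides equal 0
    have hyx : y = 1 - x := by linarith
    subst hyx
    have e1 : x + (1-x) = 1 := by ring
    have e2 : (1:ℝ) - (1-x) = x := by ring
    rw [e1, bEnt, bEnt, bEnt, e2]
    simp only [Real.log_one, mul_zero, sub_self]
    linarith
  · have h1s : (0:ℝ) < 1 - (x+y) := by linarith
    have h1x : (0:ℝ) < 1 - x := by linarith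
    have h1y : (0:ℝ) < 1 - y := by linarith
    have hs : (0:ℝ) < x + y := by linarith
    have key : bEnt x + bEnt y - bEnt (x+y)
        = x * Real.log ((1-y)*(x+y)/x) + y * Real.log ((1-x)*(x+y)/y)
          + (1-(x+y)) * Real.log ((1-x)*(1-y)/(1-(x+y))) := by
      rw [bEnt, bEnt, bEnt]
      rw [Real.log_div (by positivity) hx0.ne', Real.log_mul h1y.ne' hs.ne',
          Real.log_div (by positivity) hy0.ne', Real.log_mul h1x.ne' hs.ne',
          Real.log_div (by positivity) h1s.ne', Real.log_mul h1x.ne' h1y.ne']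
      ring
    have b1 : x - x^2/((1-y)*(x+y)) ≤ x * Real.log ((1-y)*(x+y)/x) :=
      plog_ge _ _ hx0 (by positivity)
    have b2 : y - y^2/((1-x)*(x+y)) ≤ y * Real.log ((1-x)*(x+y)/y) :=
      plog_ge _ _ hy0 (by positivity)
    have b3 : (1-(x+y)) - (1-(x+y))^2/((1-x)*(1-y))
        ≤ (1-(x+y)) * Real.log ((1-x)*(1-y)/(1-(x+y))) :=
      plog_ge _ _ h1s (by positivity)
    have hZ : x^2/((1-y)*(x+y)) + y^2/((1-x)*(x+y)) + (1-(x+y))^2/((1-x)*(1-y)) ≤ 1 := by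
      have hden : (0:ℝ) < (x+y)*(1-x)*(1-y) := by positivity
      have heq : x^2/((1-y)*(x+y)) + y^2/((1-x)*(x+y)) + (1-(x+y))^2/((1-x)*(1-y))
          = (x^2*(1-x) + y^2*(1-y) + (x+y)*(1-(x+y))^2) / ((x+y)*(1-x)*(1-y)) := by
        field_simp
      rw [heq, div_le_one hden]
      nlinarith [mul_nonneg (mul_nonneg hx hy) h1s.le]
    linarith

lemma bEnt_sum {ι : Type*} (s : Finset ι) (t : ι → ℝ) (h0 : ∀ i ∈ s, 0 ≤ t i)
    (h1 : ∑ i ∈ s, t i ≤ 1) :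
    bEnt (∑ i ∈ s, t i) ≤ ∑ i ∈ s, bEnt (t i) := by
  induction s using Finset.cons_induction with
  | empty => simp [bEnt_zero]
  | cons a s' ha IH =>
    rw [Finset.sum_cons] at h1 ⊢
    rw [Finset.sum_cons]
    have h0' : ∀ i ∈ s', 0 ≤ t i := fun i hi => h0 i (Finset.mem_cons.2 (Or.inr hi))
    have hta : 0 ≤ t a := h0 a (Finset.mem_cons_self a s')
    have hs'0 : 0 ≤ ∑ i ∈ s', t i := Finset.sum_nonneg h0'
    have := IH h0' (by linarith)
    have h2 := bEnt_superadd hta hs'0 h1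
    linarith

lemma vertexB {S : ℝ} (h0 : 0 ≤ S) (h1 : S ≤ 1) :
    (1-S) * Real.log (1-S) ≤ (1/2) * bEnt S := by
  have l1 : S * Real.log S ≤ 0 :=
    mul_nonpos_of_nonneg_of_nonpos h0 (Real.log_nonpos h0 h1)
  have l2 : (1-S) * Real.log (1-S) ≤ 0 :=
    mul_nonpos_of_nonneg_of_nonpos (by linarith) (Real.log_nonpos (by linarith) (by linarith))
  rw [bEnt]
  linarith


lemma hasDerivAt_affine (p r t : ℝ) : HasDerivAt (fun s => p + s * r) r t := by
  simpa using (hasDerivAt_mul_const r).const_add p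

lemma hasDerivAt_waffine {p r : ℝ} (t : ℝ) (hpt : p + t * r ≠ 0) :
    HasDerivAt (fun s => (p + s * r) * Real.log (p + s * r)) (r * (Real.log (p + t * r) + 1)) t := by
  have h2 := HasDerivAt.comp_of_eq t (Real.hasDerivAt_mul_log hpt) (hasDerivAt_affine p r t) rfl
  simpa [Function.comp_def, mul_comm] using h2

lemma hasDerivAt_waffine' {p r : ℝ} (t : ℝ) (hpt : 1 - (p + t * r) ≠ 0) :
    HasDerivAt (fun s => (1 - (p + s * r)) * Real.log (1 - (p + s * r)))
      (-r * (Real.log (1 - (p + t * r)) + 1)) t := by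
  have h1 : HasDerivAt (fun s : ℝ => 1 - (p + s * r)) (-r) t := (hasDerivAt_affine p r t).const_sub 1
  have h2 := HasDerivAt.comp_of_eq t (Real.hasDerivAt_mul_log hpt) h1 rfl
  have h3 : (Real.log (1 - (p + t * r)) + 1) * -r = -r * (Real.log (1 - (p + t * r)) + 1) := by ring
  simpa [Function.comp_def, h3] using h2

lemma hasDerivAt_logaffine {p r : ℝ} (t : ℝ) (hpt : p + t * r ≠ 0) :
    HasDerivAt (fun s => Real.log (p + s * r) + 1) (r / (p + t * r)) t := by
  have h2 := (HasDerivAt.comp_of_eq t (Real.hasDerivAt_log hpt) (hasDerivAt_affine p r t) rfl).add_const 1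
  have h3 : (p + t * r)⁻¹ * r = r / (p + t * r) := by field_simp
  simpa [Function.comp, h3] using h2

lemma hasDerivAt_logaffine' {p r : ℝ} (t : ℝ) (hpt : 1 - (p + t * r) ≠ 0) :
    HasDerivAt (fun s => Real.log (1 - (p + s * r)) + 1) (-r / (1 - (p + t * r))) t := by
  have h1 : HasDerivAt (fun s : ℝ => 1 - (p + s * r)) (-r) t := (hasDerivAt_affine p r t).const_sub 1
  have h2 := (HasDerivAt.comp_of_eq t (Real.hasDerivAt_log hpt) h1 rfl).add_const 1
  have h3 : (1 - (p + t * r))⁻¹ * -r = -r / (1 - (p + t * r)) := by field_simp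
  simpa [Function.comp, h3] using h2

lemma combo_pos {p q t : ℝ} (hp : 0 < p) (hq : 0 < q) (h0 : 0 ≤ t) (h1 : t ≤ 1) :
    0 < p + t * (q - p) := by
  rcases eq_or_lt_of_le h1 with rfl | h1'
  · nlinarith
  · nlinarith [mul_pos (show (0:ℝ) < 1 - t by linarith) hp, mul_nonneg h0 hq.le]


section graphFacts
variable {V : Type*} [Fintype V] (G : SimpleGraph V)

lemma mem_edgeFS {e : Sym2 V} : e ∈ edgeFS G ↔ e ∈ G.edgeSet := Set.Finite.mem_toFinset _

lemma card_vertices_of_edge {e : Sym2 V} (he : e ∈ edgeFS G) :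
    (Finset.univ.filter (fun v => v ∈ e)).card = 2 := by
  rw [mem_edgeFS] at he
  induction e using Sym2.ind with
  | _ a b =>
    have hadj : G.Adj a b := (SimpleGraph.mem_edgeSet G).1 he
    have hne : a ≠ b := G.ne_of_adj hadj
    have : Finset.univ.filter (fun v => v ∈ (s(a,b) : Sym2 V)) = {a, b} := by
      ext v
      simp [Sym2.mem_iff]
    rw [this]
    exact Finset.card_pair hne

lemma sum_incident (F : Sym2 V → ℝ) :
    ∑ v : V, ∑ e ∈ (edgeFS G).filter (fun e => v ∈ e), F e = 2 * ∑ e ∈ edgeFS G, F e := by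
  have h1 : ∀ v : V, ∑ e ∈ (edgeFS G).filter (fun e => v ∈ e), F e
      = ∑ e ∈ edgeFS G, if v ∈ e then F e else 0 := fun v => Finset.sum_filter _ _
  simp_rw [h1]
  rw [Finset.sum_comm]
  rw [Finset.mul_sum]
  refine Finset.sum_congr rfl (fun e he => ?_)
  have h2 : ∑ v : V, (if v ∈ e then F e else 0) = ∑ v ∈ Finset.univ.filter (fun v => v ∈ e), F e :=
    (Finset.sum_filter _ _).symm
  rw [h2, Finset.sum_const, card_vertices_of_edge G he]
  simp [mul_comm]

lemma le_incSum {x : Sym2 V → ℝ} (hx : ∀ f ∈ edgeFS G, 0 ≤ x f) {e : Sym2 V}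
    (he : e ∈ edgeFS G) {v : V} (hv : v ∈ e) : x e ≤ incSum G x v := by
  refine Finset.single_le_sum (fun f hf => hx f (Finset.mem_filter.1 hf).1) ?_
  exact Finset.mem_filter.2 ⟨he, hv⟩

lemma incSum_linear (x y : Sym2 V → ℝ) (a b : ℝ) (v : V) :
    incSum G (fun e => a * x e + b * y e) v = a * incSum G x v + b * incSum G y v := by
  rw [incSum, incSum, incSum, Finset.mul_sum, Finset.mul_sum, ← Finset.sum_add_distrib]

lemma exists_mem_edge (e : Sym2 V) : ∃ v : V, v ∈ e := ⟨e.out.1, Sym2.out_fst_mem e⟩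

end graphFacts

noncomputable def PhiCore {ι κ : Type*} (E : Finset ι) (K : Finset κ) (inc : κ → Finset ι)
    (c : ι → ℝ) (z : ι → ℝ) : ℝ :=
  (∑ e ∈ E, (z e * c e - z e * Real.log (z e) + (1 - z e) * Real.log (1 - z e)))
    - ∑ v ∈ K, (1 - ∑ e ∈ inc v, z e) * Real.log (1 - ∑ e ∈ inc v, z e)


lemma core_concave {ι κ : Type*} (E : Finset ι) (K : Finset κ) (inc : κ → Finset ι)
    (hincE : ∀ v ∈ K, inc v ⊆ E)
    (hcover : ∀ e ∈ E, ∃ v ∈ K, e ∈ inc v)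
    (hdouble : ∀ F : ι → ℝ, ∑ v ∈ K, ∑ e ∈ inc v, F e = 2 * ∑ e ∈ E, F e)
    (c : ι → ℝ) (x y : ι → ℝ)
    (hx : ∀ e ∈ E, 0 < x e) (hy : ∀ e ∈ E, 0 < y e)
    (hSx : ∀ v ∈ K, ∑ e ∈ inc v, x e < 1) (hSy : ∀ v ∈ K, ∑ e ∈ inc v, y e < 1)
    {a b : ℝ} (ha : 0 ≤ a) (hb : 0 ≤ b) (hab : a + b = 1) :
    a * PhiCore E K inc c x + b * PhiCore E K inc c y
      ≤ PhiCore E K inc c (fun e => a * x e + b * y e) := by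
  classical
  set h : ι → ℝ := fun e => y e - x e with hhdef
  set Qx : κ → ℝ := fun v => ∑ e ∈ inc v, x e with hQxdef
  set Qy : κ → ℝ := fun v => ∑ e ∈ inc v, y e with hQydef
  -- sums of the affine path over incidences
  have hsumA : ∀ (t : ℝ) (v : κ), ∑ e ∈ inc v, (x e + t * h e) = Qx v + t * (Qy v - Qx v) := by
    intro t v
    simp only [hhdef, hQxdef, hQydef]
    rw [Finset.sum_add_distrib, ← Finset.mul_sum, Finset.sum_sub_distrib]
  have hsumh : ∀ v : κ, ∑ e ∈ inc v, h e = Qy v - Qx v := by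
    intro v
    simp only [hhdef, hQxdef, hQydef]
    rw [Finset.sum_sub_distrib]
  -- the three functions
  set g : ℝ → ℝ := fun t =>
    (∑ e ∈ E, ((x e + t * h e) * c e - (x e + t * h e) * Real.log (x e + t * h e)
      + (1 - (x e + t * h e)) * Real.log (1 - (x e + t * h e))))
    - ∑ v ∈ K, (1 - (Qx v + t * (Qy v - Qx v))) * Real.log (1 - (Qx v + t * (Qy v - Qx v)))
    with hgdef
  set g1 : ℝ → ℝ := fun t =>
    (∑ e ∈ E, (h e * c e - h e * (Real.log (x e + t * h e) + 1)
       + -(h e) * (Real.log (1 - (x e + t * h e)) + 1)))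
    - ∑ v ∈ K, -(Qy v - Qx v) * (Real.log (1 - (Qx v + t * (Qy v - Qx v))) + 1)
    with hg1def
  set g2 : ℝ → ℝ := fun t =>
    (∑ e ∈ E, (0 - h e * (h e / (x e + t * h e)) + -(h e) * (-(h e) / (1 - (x e + t * h e)))))
    - ∑ v ∈ K, -(Qy v - Qx v) * (-(Qy v - Qx v) / (1 - (Qx v + t * (Qy v - Qx v))))
    with hg2def
  -- positivity facts along the segment
  have hA : ∀ t ∈ Set.Icc (0:ℝ) 1, ∀ e ∈ E, 0 < x e + t * h e := by
    intro t ht e he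
    have := combo_pos (hx e he) (hy e he) ht.1 ht.2
    simpa [hhdef] using this
  have hB : ∀ t ∈ Set.Icc (0:ℝ) 1, ∀ v ∈ K, Qx v + t * (Qy v - Qx v) < 1 := by
    intro t ht v hv
    have h1 : (0:ℝ) < 1 - Qx v := by have := hSx v hv; simp only [hQxdef]; linarith
    have h2 : (0:ℝ) < 1 - Qy v := by have := hSy v hv; simp only [hQydef]; linarith
    have := combo_pos h1 h2 ht.1 ht.2
    nlinarith [this]
  have hA1 : ∀ t ∈ Set.Icc (0:ℝ) 1, ∀ e ∈ E, x e + t * h e < 1 := by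
    intro t ht e he
    obtain ⟨v, hv, hev⟩ := hcover e he
    have hle : x e + t * h e ≤ ∑ f ∈ inc v, (x f + t * h f) :=
      Finset.single_le_sum (fun f hf => (hA t ht f (hincE v hv hf)).le) hev
    rw [hsumA t v] at hle
    exact lt_of_le_of_lt hle (hB t ht v hv)
  -- first derivative
  have hg : ∀ t ∈ Set.Icc (0:ℝ) 1, HasDerivAt g (g1 t) t := by
    intro t ht
    apply HasDerivAt.sub
    · apply HasDerivAt.fun_sum
      intro e he
      have h1 : x e + t * h e ≠ 0 := (hA t ht e he).ne'
      have h2 : 1 - (x e + t * h e) ≠ 0 := by have := hA1 t ht e he; intro hc; linarith [hc]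
      exact (((hasDerivAt_affine (x e) (h e) t).mul_const (c e)).sub
        (hasDerivAt_waffine t h1)).add (hasDerivAt_waffine' t h2)
    · apply HasDerivAt.fun_sum
      intro v hv
      have h3 : 1 - (Qx v + t * (Qy v - Qx v)) ≠ 0 := by
        have := hB t ht v hv; intro hc; linarith [hc]
      exact hasDerivAt_waffine' t h3
  -- second derivative
  have hg1 : ∀ t ∈ Set.Icc (0:ℝ) 1, HasDerivAt g1 (g2 t) t := by
    intro t ht
    apply HasDerivAt.sub
    · apply HasDerivAt.fun_sum
      intro e he
      have h1 : x e + t * h e ≠ 0 := (hA t ht e he).ne'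
      have h2 : 1 - (x e + t * h e) ≠ 0 := by have := hA1 t ht e he; intro hc; linarith [hc]
      exact (((hasDerivAt_const t (h e * c e)).sub
        ((hasDerivAt_logaffine t h1).const_mul (h e))).add
        ((hasDerivAt_logaffine' t h2).const_mul (-(h e))))
    · apply HasDerivAt.fun_sum
      intro v hv
      have h3 : 1 - (Qx v + t * (Qy v - Qx v)) ≠ 0 := by
        have := hB t ht v hv; intro hc; linarith [hc]
      exact (hasDerivAt_logaffine' t h3).const_mul (-(Qy v - Qx v))
  -- second derivative nonpositive
  have hg2le : ∀ t ∈ Set.Icc (0:ℝ) 1, g2 t ≤ 0 := by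
    intro t ht
    have key : ∀ v ∈ K, ∑ e ∈ inc v, (h e)^2/(1 - (x e + t * h e))
        ≤ ∑ e ∈ inc v, (h e)^2/(x e + t * h e)
          + 2*(Qy v - Qx v)^2/(1 - (Qx v + t * (Qy v - Qx v))) := by
      intro v hv
      have := starIneq (inc v) (fun e => x e + t * h e) h
        (fun e hev => hA t ht e (hincE v hv hev)) (by rw [hsumA t v]; exact hB t ht v hv)
      rw [hsumA t v, hsumh v] at this
      exact this
    have hsummed := Finset.sum_le_sum key
    rw [Finset.sum_add_distrib] at hsummed
    rw [hdouble (fun e => (h e)^2/(1 - (x e + t * h e))),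
        hdouble (fun e => (h e)^2/(x e + t * h e))] at hsummed
    have hrew : g2 t = -(∑ e ∈ E, (h e)^2/(x e + t * h e))
        + (∑ e ∈ E, (h e)^2/(1 - (x e + t * h e)))
        - ∑ v ∈ K, (Qy v - Qx v)^2/(1 - (Qx v + t * (Qy v - Qx v))) := by
      simp only [hg2def]
      have e1 : ∀ e ∈ E, (0 - h e * (h e / (x e + t * h e))
          + -(h e) * (-(h e) / (1 - (x e + t * h e))))
          = -((h e)^2/(x e + t * h e)) + (h e)^2/(1 - (x e + t * h e)) := by
        intro e _; ring
      have e2 : ∀ v ∈ K, -(Qy v - Qx v) * (-(Qy v - Qx v) / (1 - (Qx v + t * (Qy v - Qx v))))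
          = (Qy v - Qx v)^2/(1 - (Qx v + t * (Qy v - Qx v))) := by
        intro v _; ring
      rw [Finset.sum_congr rfl e1, Finset.sum_congr rfl e2, Finset.sum_add_distrib,
        Finset.sum_neg_distrib]
      -- ring not needed
    rw [hrew]
    have hv2 : ∑ v ∈ K, 2*(Qy v - Qx v)^2/(1 - (Qx v + t * (Qy v - Qx v)))
        = 2 * ∑ v ∈ K, (Qy v - Qx v)^2/(1 - (Qx v + t * (Qy v - Qx v))) := by
      rw [Finset.mul_sum]
      refine Finset.sum_congr rfl (fun v _ => ?_)
      ring
    rw [hv2] at hsummed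
    linarith
  -- concavity of g on [0,1]
  have hcont : ContinuousOn g (Set.Icc (0:ℝ) 1) :=
    fun t ht => ((hg t ht).continuousAt).continuousWithinAt
  have hconc : ConcaveOn ℝ (Set.Icc (0:ℝ) 1) g := by
    apply concaveOn_of_hasDerivWithinAt2_nonpos (convex_Icc _ _) hcont
      (f' := g1) (f'' := g2)
    · intro t ht
      rw [interior_Icc] at ht
      exact ((hg t (Set.Ioo_subset_Icc_self ht)).hasDerivWithinAt)
    · intro t ht
      rw [interior_Icc] at ht
      exact ((hg1 t (Set.Ioo_subset_Icc_self ht)).hasDerivWithinAt)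
    · intro t ht
      rw [interior_Icc] at ht
      exact hg2le t (Set.Ioo_subset_Icc_self ht)
  -- evaluation of g
  have heval : ∀ t : ℝ, g t = PhiCore E K inc c (fun e => x e + t * h e) := by
    intro t
    simp only [hgdef, PhiCore]
    congr 1
    refine Finset.sum_congr rfl (fun v hv => ?_)
    rw [hsumA t v]
  have h0m : (0:ℝ) ∈ Set.Icc (0:ℝ) 1 := by constructor <;> norm_num
  have h1m : (1:ℝ) ∈ Set.Icc (0:ℝ) 1 := by constructor <;> norm_num
  have hmain := hconc.2 h0m h1m ha hb hab
  simp only [smul_eq_mul] at hmain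
  have hab' : a * 0 + b * 1 = b := by ring
  rw [hab'] at hmain
  have e0 : g 0 = PhiCore E K inc c x := by
    rw [heval 0]
    congr 1
    funext e
    ring
  have e1 : g 1 = PhiCore E K inc c y := by
    rw [heval 1]
    congr 1
    funext e
    simp only [hhdef]
    ring
  have eb : g b = PhiCore E K inc c (fun e => a * x e + b * y e) := by
    rw [heval b]
    congr 1
    funext e
    simp only [hhdef]
    have hA : a = 1 - b := by linarith
    rw [hA]
    ring
  rw [e0, e1, eb] at hmain
  exact hmain


section main
variable {V : Type*} [Fintype V] (G : SimpleGraph V) (θ : Sym2 V → ℝ)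

def SBWs (x : Sym2 V → ℝ) : ℝ :=
  PhiCore (edgeFS G) Finset.univ (fun v => (edgeFS G).filter (fun e => v ∈ e))
    (fun e => Real.log (θ e)) x

lemma incSum_eq (x : Sym2 V → ℝ) (v : V) :
    incSum G x v = ∑ e ∈ (edgeFS G).filter (fun e => v ∈ e), x e := rfl

lemma SBW_eq (hθ : ∀ e ∈ G.edgeSet, 0 < θ e) (x : Sym2 V → ℝ) :
    SBW G θ x = SBWs G θ x := by
  rw [SBW, SBWs, PhiCore]
  congr 1
  · refine Finset.sum_congr rfl (fun e he => ?_)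
    have hθe : θ e ≠ 0 := (hθ e ((mem_edgeFS G).1 he)).ne'
    rcases eq_or_ne (x e) 0 with hx0 | hx0
    · simp [hx0]
    · rw [Real.log_div hθe hx0]
      ring

lemma SBWs_continuous : Continuous (SBWs G θ) := by
  rw [show SBWs G θ = fun x => SBWs G θ x from rfl]
  simp only [SBWs, PhiCore]
  apply Continuous.sub
  · apply continuous_finset_sum
    intro e _
    apply Continuous.add
    · apply Continuous.sub
      · exact (continuous_apply e).mul continuous_const
      · exact Real.continuous_mul_log.comp (continuous_apply e)
    · exact Real.continuous_mul_log.comp (continuous_const.sub (continuous_apply e))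
  · apply continuous_finset_sum
    intro v _
    exact Real.continuous_mul_log.comp
      (continuous_const.sub (continuous_finset_sum _ (fun e _ => continuous_apply e)))

-- concavity of SBWs on the strict region, stated for convex-combination inputs
lemma SBWs_combo (x y : Sym2 V → ℝ)
    (hx : ∀ e ∈ edgeFS G, 0 < x e) (hy : ∀ e ∈ edgeFS G, 0 < y e)
    (hSx : ∀ v : V, incSum G x v < 1) (hSy : ∀ v : V, incSum G y v < 1)
    {a b : ℝ} (ha : 0 ≤ a) (hb : 0 ≤ b) (hab : a + b = 1) :
    a * SBWs G θ x + b * SBWs G θ y ≤ SBWs G θ (fun e => a * x e + b * y e) := by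
  apply core_concave
  · intro v _; exact Finset.filter_subset _ _
  · intro e he
    obtain ⟨v, hv⟩ := exists_mem_edge e
    exact ⟨v, Finset.mem_univ v, Finset.mem_filter.2 ⟨he, hv⟩⟩
  · exact sum_incident G
  · exact hx
  · exact hy
  · intro v _; exact hSx v
  · intro v _; exact hSy v
  · exact ha
  · exact hb
  · exact hab
end main

section main2
variable {V : Type*} [Fintype V] (G : SimpleGraph V) (θ : Sym2 V → ℝ)

lemma FM_convex : Convex ℝ {x : Sym2 V → ℝ | memFM G x} := by
  intro x hx y hy a b ha hb hab
  have hxy : a • x + b • y = fun e => a * x e + b * y e := by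
    funext e; simp [smul_eq_mul]
  constructor
  · intro e he
    rw [hxy]
    exact add_nonneg (mul_nonneg ha (hx.1 e he)) (mul_nonneg hb (hy.1 e he))
  · intro v
    rw [hxy]
    have hlin : incSum G (fun e => a * x e + b * y e) v
        = a * incSum G x v + b * incSum G y v := by
      rw [incSum_eq, incSum_eq, incSum_eq, Finset.mul_sum, Finset.mul_sum,
        ← Finset.sum_add_distrib]
    rw [hlin]
    have h1 := mul_le_mul_of_nonneg_left (hx.2 v) ha
    have h2 := mul_le_mul_of_nonneg_left (hy.2 v) hb
    linarith

lemma SBW_concave (hθ : ∀ e ∈ G.edgeSet, 0 < θ e) :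
    ConcaveOn ℝ {x : Sym2 V → ℝ | memFM G x} (SBW G θ) := by
  constructor
  · exact FM_convex G
  · intro x hx y hy a b ha hb hab
    simp only [Set.mem_setOf_eq] at hx hy
    simp only [smul_eq_mul]
    have hxy : a • x + b • y = fun e => a * x e + b * y e := by
      funext e; simp [smul_eq_mul]
    rw [hxy, SBW_eq G θ hθ, SBW_eq G θ hθ, SBW_eq G θ hθ]
    -- approximation point
    set N := (edgeFS G).card with hNdef
    set ε : ℝ := 1/(2*N+2) with hεdef
    have hε : 0 < ε := by rw [hεdef]; positivity
    set z0 : Sym2 V → ℝ := fun _ => ε with hz0def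
    have hz0S : ∀ v : V, incSum G z0 v < 1 := by
      intro v
      rw [incSum_eq]
      rw [Finset.sum_const, nsmul_eq_mul]
      have hcard : (((edgeFS G).filter (fun e => v ∈ e)).card : ℝ) ≤ (N:ℝ) := by
        exact_mod_cast Finset.card_filter_le _ _
      have hN : (0:ℝ) ≤ (N:ℝ) := Nat.cast_nonneg _
      calc (((edgeFS G).filter (fun e => v ∈ e)).card : ℝ) * ε ≤ (N:ℝ) * ε :=
            mul_le_mul_of_nonneg_right hcard hε.le
      _ = (N:ℝ)/(2*N+2) := by rw [hεdef]; ring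
      _ < 1 := by rw [div_lt_one (by positivity)]; linarith
    set u : ℕ → ℝ := fun n => 1/(n+1) with hudef
    have hu0 : ∀ n, 0 < u n := fun n => by rw [hudef]; positivity
    have hu1 : ∀ n, u n ≤ 1 := by
      intro n
      rw [hudef]
      have h1 : (1:ℝ) ≤ (n:ℝ)+1 := by
        have : (0:ℝ) ≤ (n:ℝ) := Nat.cast_nonneg n; linarith
      rw [div_le_one (by positivity)]
      exact h1
    have hu : Filter.Tendsto u Filter.atTop (nhds 0) := tendsto_one_div_add_atTop_nhds_zero_nat
    set P : (Sym2 V → ℝ) → ℕ → (Sym2 V → ℝ) :=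
      fun w n => fun e => (1 - u n) * w e + u n * z0 e with hPdef
    have hPpos : ∀ w : Sym2 V → ℝ, memFM G w → ∀ n, ∀ e ∈ edgeFS G, 0 < P w n e := by
      intro w hw n e he
      have h1 : 0 ≤ (1 - u n) * w e := mul_nonneg (by linarith [hu1 n]) (hw.1 e he)
      have h2 : 0 < u n * z0 e := mul_pos (hu0 n) (by rw [hz0def]; exact hε)
      rw [hPdef]
      dsimp only
      linarith
    have hPS : ∀ w : Sym2 V → ℝ, memFM G w → ∀ n, ∀ v : V, incSum G (P w n) v < 1 := by
      intro w hw n v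
      have hlin : incSum G (P w n) v
          = (1 - u n) * incSum G w v + u n * incSum G z0 v := by
        rw [hPdef, incSum_eq, incSum_eq, incSum_eq, Finset.mul_sum, Finset.mul_sum,
          ← Finset.sum_add_distrib]
      rw [hlin]
      have h1 : (1 - u n) * incSum G w v ≤ (1 - u n) :=
        calc (1 - u n) * incSum G w v ≤ (1 - u n) * 1 :=
              mul_le_mul_of_nonneg_left (hw.2 v) (by linarith [hu1 n])
        _ = 1 - u n := by ring
      have h2 : u n * incSum G z0 v < u n * 1 :=
        mul_lt_mul_of_pos_left (hz0S v) (hu0 n)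
      linarith
    have key : ∀ n, a * SBWs G θ (P x n) + b * SBWs G θ (P y n)
        ≤ SBWs G θ (P (fun e => a * x e + b * y e) n) := by
      intro n
      have := SBWs_combo G θ (P x n) (P y n) (hPpos x hx n) (hPpos y hy n)
        (hPS x hx n) (hPS y hy n) ha hb hab
      have heq : (fun e => a * P x n e + b * P y n e)
          = P (fun e => a * x e + b * y e) n := by
        funext e
        rw [hPdef]
        dsimp only
        have hA : a = 1 - b := by linarith
        rw [hA]; ring
      rw [heq] at this
      exact this
    -- limits
    have hP_tendsto : ∀ w : Sym2 V → ℝ,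
        Filter.Tendsto (fun n => SBWs G θ (P w n)) Filter.atTop (nhds (SBWs G θ w)) := by
      intro w
      apply Filter.Tendsto.comp (SBWs_continuous G θ).continuousAt
      rw [tendsto_pi_nhds]
      intro e
      have : Filter.Tendsto (fun n => (1 - u n) * w e + u n * z0 e) Filter.atTop
          (nhds ((1 - 0) * w e + 0 * z0 e)) := by
        exact ((tendsto_const_nhds.sub hu).mul tendsto_const_nhds).add
          (hu.mul tendsto_const_nhds)
      simpa using this
    refine le_of_tendsto_of_tendsto'
      (((hP_tendsto x).const_mul a).add ((hP_tendsto y).const_mul b))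
      (hP_tendsto (fun e => a * x e + b * y e)) key

lemma SBW_nonneg (hθ1 : ∀ e ∈ G.edgeSet, θ e = 1) (x : Sym2 V → ℝ) (hx : memFM G x) :
    0 ≤ SBW G θ x := by
  have hθpos : ∀ e ∈ G.edgeSet, 0 < θ e := fun e he => by rw [hθ1 e he]; norm_num
  rw [SBW_eq G θ hθpos x, SBWs, PhiCore]
  have hedge : ∑ e ∈ edgeFS G, (x e * Real.log (θ e) - x e * Real.log (x e)
      + (1 - x e) * Real.log (1 - x e)) = ∑ e ∈ edgeFS G, bEnt (x e) := by
    refine Finset.sum_congr rfl (fun e he => ?_)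
    rw [hθ1 e ((mem_edgeFS G).1 he), Real.log_one, bEnt]
    ring
  rw [hedge]
  have hdouble := sum_incident G (fun e => bEnt (x e))
  have hvert : ∀ v : V, (1 - ∑ e ∈ (edgeFS G).filter (fun e => v ∈ e), x e)
      * Real.log (1 - ∑ e ∈ (edgeFS G).filter (fun e => v ∈ e), x e)
      ≤ (1/2) * ∑ e ∈ (edgeFS G).filter (fun e => v ∈ e), bEnt (x e) := by
    intro v
    have h0 : ∀ e ∈ (edgeFS G).filter (fun e => v ∈ e), 0 ≤ x e :=
      fun e he => hx.1 e (Finset.mem_filter.1 he).1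
    have hS0 : 0 ≤ ∑ e ∈ (edgeFS G).filter (fun e => v ∈ e), x e := Finset.sum_nonneg h0
    have hS1 : ∑ e ∈ (edgeFS G).filter (fun e => v ∈ e), x e ≤ 1 := hx.2 v
    calc (1 - ∑ e ∈ (edgeFS G).filter (fun e => v ∈ e), x e)
        * Real.log (1 - ∑ e ∈ (edgeFS G).filter (fun e => v ∈ e), x e)
        ≤ (1/2) * bEnt (∑ e ∈ (edgeFS G).filter (fun e => v ∈ e), x e) := vertexB hS0 hS1
    _ ≤ (1/2) * ∑ e ∈ (edgeFS G).filter (fun e => v ∈ e), bEnt (x e) := by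
        have := bEnt_sum ((edgeFS G).filter (fun e => v ∈ e)) x h0 hS1
        linarith
  have hsummed := Finset.sum_le_sum (fun v (_ : v ∈ Finset.univ) => hvert v)
  rw [← Finset.mul_sum, hdouble] at hsummed
  linarith

end main2

/-- The weighted Bethe entropy is concave on the fractional matching
polytope; for unit weights it is also nonnegative there. -/
theorem bethe_entropy_concave_nonneg {V : Type*} [Fintype V] (G : SimpleGraph V)
    (θ : Sym2 V → ℝ) (hθ : ∀ e ∈ G.edgeSet, 0 < θ e) :
    ConcaveOn ℝ {x : Sym2 V → ℝ | memFM G x} (SBW G θ) ∧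
    ((∀ e ∈ G.edgeSet, θ e = 1) →
      ∀ x : Sym2 V → ℝ, memFM G x → 0 ≤ SBW G θ x) := by
  exact ⟨SBW_concave G θ hθ, fun h1 x hx => SBW_nonneg G θ h1 x hx⟩
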